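/- Let n ≥ 1 be an integer, let a_1, …, a_n be real numbers, and let α = (α_1, …, α_n) ∈ ℕ^n be a vector of positive integers with |α| = α_1 + ⋯ + α_n. For each j define g_j : (0, ∞) → ℂ by g_j(t) = t^{α_j - 1} e^{-i a_j t}/Γ(α_j) (so that the Laplace transform of g_j is (s + i a_j)^{-α_j}), and let f_{n,α} = g_1 * g_2 * ⋯ * g_n be the iterated convolution, where (g * h)(t) = ∫_0^t g(τ) h(t - τ) dτ. Then |f_{n,α}(t)| ≤ t^{|α| - 1}/Γ(|α|) for all t ∈ (0, ∞). -/

import Mathlib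

open scoped RealInnerProductSpace
open MeasureTheory
open scoped Classical

noncomputable section


/-- Bessel function of the first kind of real order `ν`:
`J_ν(w) = Σ_{k=0}^∞ (-1)^k/(k! Γ(k+ν+1)) (w/2)^{2k+ν}`. -/
def besselJ (ν : ℝ) (w : ℝ) : ℝ :=
  ∑' k : ℕ, (-1 : ℝ) ^ k / (k.factorial * Real.Gamma ((k : ℝ) + ν + 1)) *
    (w / 2) ^ (2 * (k : ℝ) + ν)

/-- The two-dimensional radially deformed Fourier kernel `K_a^2(z, cos θ)`,
as a function of `z ≥ 0` and the angle `θ ∈ [0, π]`: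
`K_a^2(z, cos θ) = J_0(z_a) + 2 Σ_{k=1}^∞ e^{-iπk/a} J_{2k/a}(z_a) cos(kθ)`, `z_a = (2/a) z^{a/2}`. -/
def kernelK2 (a : ℝ) (z θ : ℝ) : ℂ :=
  (besselJ 0 ((2 / a) * z ^ (a / 2)) : ℂ) +
    2 * ∑' k : ℕ,
      Complex.exp (-Complex.I * Real.pi * ((k : ℂ) + 1) / a) *
        (besselJ (2 * ((k : ℝ) + 1) / a) ((2 / a) * z ^ (a / 2)) : ℂ) *
        (Real.cos (((k : ℝ) + 1) * θ) : ℂ)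

/-- `K_a^2(x, y)` for points `x, y ∈ ℝ²`, with `K_a^2(x,y) = 1` if `x = 0` or `y = 0`. -/
def kernelK2pt (a : ℝ) (x y : EuclideanSpace ℝ (Fin 2)) : ℂ :=
  if x = 0 ∨ y = 0 then 1
  else kernelK2 a (‖x‖ * ‖y‖) (Real.arccos (⟪x, y⟫ / (‖x‖ * ‖y‖)))

/-- Gegenbauer polynomials `C_k^{(λ)}`, via the recurrence
`(k+2) C_{k+2}(ξ) = 2(k+1+λ) ξ C_{k+1}(ξ) - (k+2λ) C_k(ξ)`, `C_0 = 1`, `C_1(ξ) = 2λξ`,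
equivalent to the generating function `(1 - 2ξt + t²)^{-λ} = Σ_k C_k^{(λ)}(ξ) t^k`. -/
def gegenbauer (l : ℝ) : ℕ → ℝ → ℝ
  | 0, _ => 1
  | 1, ξ => 2 * l * ξ
  | (k + 2), ξ =>
      (2 * ((k : ℝ) + 1 + l) * ξ * gegenbauer l (k + 1) ξ -
        ((k : ℝ) + 2 * l) * gegenbauer l k ξ) / ((k : ℝ) + 2)

/-- The function `z ↦ z^{-λ} J_{2(k+λ)/a}((2/a) z^{a/2})`, extended continuously to `z = 0`. -/
def kernelTerm (a l : ℝ) (k : ℕ) (z : ℝ) : ℝ :=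
  if z = 0 then (if k = 0 then a ^ (-(2 * l / a)) / Real.Gamma (2 * l / a + 1) else 0)
  else z ^ (-l) * besselJ (2 * ((k : ℝ) + l) / a) ((2 / a) * z ^ (a / 2))

/-- The radially deformed Fourier kernel `K_a^m(z, ξ)`, `z ≥ 0`, `ξ ∈ [-1,1]`, `λ = (m-2)/2`:
for `m ≥ 3`,
`K_a^m(z,ξ) = a^{2λ/a} Γ((2λ+a)/a) Σ_k e^{-iπk/a} ((λ+k)/λ) z^{-λ} J_{2(k+λ)/a}((2/a)z^{a/2}) C_k^{(λ)}(ξ)`;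
for `m = 2` it is `kernelK2 a z (arccos ξ)`. -/
def kernelKm (a : ℝ) (m : ℕ) (z ξ : ℝ) : ℂ :=
  if m = 2 then kernelK2 a z (Real.arccos ξ)
  else
    (((a : ℝ) ^ (2 * (((m : ℝ) - 2) / 2) / a) *
        Real.Gamma ((2 * (((m : ℝ) - 2) / 2) + a) / a) : ℝ) : ℂ) *
      ∑' k : ℕ,
        Complex.exp (-Complex.I * Real.pi * (k : ℂ) / a) *
          ((((((m : ℝ) - 2) / 2) + (k : ℝ)) / (((m : ℝ) - 2) / 2) : ℝ) : ℂ) *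
          ((kernelTerm a (((m : ℝ) - 2) / 2) k z : ℝ) : ℂ) *
          ((gegenbauer (((m : ℝ) - 2) / 2) k ξ : ℝ) : ℂ)

/-- `K_a^m(x, y)` for points `x, y ∈ ℝ^m`, with value `1` when `x = 0` or `y = 0`. -/
def kernelKmPt (a : ℝ) (m : ℕ) (x y : EuclideanSpace ℝ (Fin m)) : ℂ :=
  if x = 0 ∨ y = 0 then 1
  else kernelKm a m (‖x‖ * ‖y‖) (⟪x, y⟫ / (‖x‖ * ‖y‖))

/-- The error function `erf(w) = (2/√π) ∫_0^w e^{-t²} dt` for complex `w`,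
the integral taken along the segment from `0` to `w`. -/
def cerf (w : ℂ) : ℂ :=
  (2 / Real.sqrt Real.pi : ℝ) * ∫ s in (0:ℝ)..1, w * Complex.exp (-((s : ℂ) * w) ^ 2)

/-- The complementary error function `erfc(w) = 1 - erf(w)`. -/
def cerfc (w : ℂ) : ℂ := 1 - cerf w

/-- Convolution on `(0,∞)`: `(g * h)(t) = ∫_0^t g(τ) h(t-τ) dτ`. -/
def conv (g h : ℝ → ℂ) : ℝ → ℂ := fun t => ∫ τ in (0:ℝ)..t, g τ * h (t - τ)

/-- Iterated convolution `g_1 * g_2 * ⋯ * g_n`. -/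
def iterConv : List (ℝ → ℂ) → (ℝ → ℂ)
  | [] => fun _ => 0
  | [g] => g
  | g :: gs => conv g (iterConv gs)




lemma beta_nat (p q : ℕ) (hp : 1 ≤ p) (hq : 1 ≤ q) {t : ℝ} (ht : 0 < t) :
    ∫ τ in (0:ℝ)..t, τ ^ (p - 1) * (t - τ) ^ (q - 1) =
      Real.Gamma p * Real.Gamma q / Real.Gamma ((p + q : ℕ) : ℝ) * t ^ (p + q - 1) := by
  have h1 : (∫ τ in (0:ℝ)..t, ((τ:ℂ)) ^ ((p:ℂ) - 1) * ((t:ℂ) - τ) ^ ((q:ℂ) - 1))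
      = (t:ℂ) ^ ((p:ℂ) + (q:ℂ) - 1) * Complex.betaIntegral p q :=
    Complex.betaIntegral_scaled p q ht
  have hpc : ((p:ℂ) - 1) = ((p - 1 : ℕ) : ℂ) := by
    push_cast [Nat.cast_sub hp]; ring
  have hqc : ((q:ℂ) - 1) = ((q - 1 : ℕ) : ℂ) := by
    push_cast [Nat.cast_sub hq]; ring
  have hpqc : ((p:ℂ) + (q:ℂ) - 1) = ((p + q - 1 : ℕ) : ℂ) := by
    push_cast [Nat.cast_sub (le_trans hp (Nat.le_add_right p q))]; ring
  rw [hpc, hqc, hpqc] at h1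
  simp_rw [Complex.cpow_natCast] at h1
  have h2 : (∫ τ in (0:ℝ)..t, ((τ:ℂ)) ^ (p - 1) * ((t:ℂ) - τ) ^ (q - 1))
      = ((∫ τ in (0:ℝ)..t, τ ^ (p - 1) * (t - τ) ^ (q - 1) : ℝ) : ℂ) := by
    rw [← intervalIntegral.integral_ofReal]
    congr 1; ext τ; push_cast; ring
  have hbeta : Complex.betaIntegral p q
      = ((Real.Gamma p * Real.Gamma q / Real.Gamma ((p + q : ℕ) : ℝ) : ℝ) : ℂ) := by
    have hpre : 0 < Complex.re (p : ℂ) := by simpa using (by positivity : (0:ℝ) < p)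
    have hqre : 0 < Complex.re (q : ℂ) := by simpa using (by positivity : (0:ℝ) < q)
    have hGG := Complex.Gamma_mul_Gamma_eq_betaIntegral hpre hqre
    have key : ((Real.Gamma p : ℝ):ℂ) * ((Real.Gamma q : ℝ):ℂ)
        = ((Real.Gamma ((p + q : ℕ) : ℝ) : ℝ):ℂ) * Complex.betaIntegral p q := by
      rw [← Complex.Gamma_ofReal, ← Complex.Gamma_ofReal, ← Complex.Gamma_ofReal]
      push_cast
      exact hGG
    have hG : ((Real.Gamma ((p + q : ℕ) : ℝ) : ℝ):ℂ) ≠ 0 := by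
      exact_mod_cast (Real.Gamma_pos_of_pos (by positivity : (0:ℝ) < ((p + q : ℕ) : ℝ))).ne'
    rw [Complex.ofReal_div, Complex.ofReal_mul, eq_div_iff hG]
    linear_combination -key
  rw [h2, hbeta] at h1
  have h3 : ((t:ℂ)) ^ (p + q - 1) = (((t ^ (p + q - 1) : ℝ)) : ℂ) := by push_cast; ring
  rw [h3, ← Complex.ofReal_mul] at h1
  have h4 : (∫ τ in (0:ℝ)..t, τ ^ (p - 1) * (t - τ) ^ (q - 1))
      = t ^ (p + q - 1) * (Real.Gamma p * Real.Gamma q / Real.Gamma ((p + q : ℕ) : ℝ)) := by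
    exact_mod_cast h1
  rw [h4]; ring

lemma g_abs (a : ℝ) (p : ℕ) {s : ℝ} (hs : 0 ≤ s) :
    ‖(s:ℂ) ^ (p - 1) * Complex.exp (-Complex.I * (a:ℂ) * (s:ℂ)) /
        ((Real.Gamma p : ℝ) : ℂ)‖ = s ^ (p - 1) / Real.Gamma p := by
  rw [norm_div, norm_mul, norm_pow, Complex.norm_real, Complex.norm_real, Complex.norm_exp,
    Real.norm_eq_abs, Real.norm_eq_abs]
  have : (-Complex.I * (a:ℂ) * (s:ℂ)).re = 0 := by simp
  rw [this, Real.exp_zero, mul_one, abs_of_nonneg hs,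
    abs_of_nonneg (Real.Gamma_nonneg_of_nonneg (by positivity))]

lemma conv_step (a : ℝ) (p q : ℕ) (hp : 1 ≤ p) (hq : 1 ≤ q) (f : ℝ → ℂ)
    (hf : ∀ s : ℝ, 0 < s → ‖f s‖ ≤ s ^ (q - 1) / Real.Gamma q)
    {t : ℝ} (ht : 0 < t) :
    ‖conv (fun s : ℝ => (s:ℂ) ^ (p - 1) *
        Complex.exp (-Complex.I * (a:ℂ) * (s:ℂ)) / ((Real.Gamma p : ℝ) : ℂ)) f t‖
      ≤ t ^ (p + q - 1) / Real.Gamma ((p + q : ℕ) : ℝ) := by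
  have hΓp : 0 < Real.Gamma p := Real.Gamma_pos_of_pos (by positivity)
  have hΓq : 0 < Real.Gamma q := Real.Gamma_pos_of_pos (by positivity)
  have hΓpq : 0 < Real.Gamma ((p + q : ℕ) : ℝ) := Real.Gamma_pos_of_pos (by positivity)
  rw [conv]
  set B : ℝ → ℝ := fun τ => τ ^ (p - 1) * (t - τ) ^ (q - 1) / (Real.Gamma p * Real.Gamma q)
    with hB
  have hBint : IntervalIntegrable B volume 0 t := by
    apply Continuous.intervalIntegrable
    fun_prop
  have hbound : ∀ᵐ τ ∂(volume.restrict (Set.uIoc (0:ℝ) t)),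
      ‖(fun τ : ℝ => ((τ:ℂ) ^ (p - 1) * Complex.exp (-Complex.I * (a:ℂ) * (τ:ℂ)) /
          ((Real.Gamma p : ℝ) : ℂ)) * f (t - τ)) τ‖ ≤ B τ := by
    have hne : ∀ᵐ τ ∂(volume.restrict (Set.uIoc (0:ℝ) t)), τ ≠ t := by
      refine ae_restrict_of_ae ?_
      simp only [ae_iff, not_not, Set.setOf_eq_eq_singleton]
      exact Real.volume_singleton
    filter_upwards [ae_restrict_mem measurableSet_uIoc, hne] with τ hτ hτt
    rw [Set.uIoc_of_le ht.le] at hτ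
    have hτ0 : 0 < τ := hτ.1
    have htτ : 0 < t - τ := sub_pos.mpr (lt_of_le_of_ne hτ.2 hτt)
    have : ‖((τ:ℂ) ^ (p - 1) * Complex.exp (-Complex.I * (a:ℂ) * (τ:ℂ)) /
          ((Real.Gamma p : ℝ) : ℂ)) * f (t - τ)‖
        = ‖(τ:ℂ) ^ (p - 1) * Complex.exp (-Complex.I * (a:ℂ) * (τ:ℂ)) /
          ((Real.Gamma p : ℝ) : ℂ)‖ * ‖f (t - τ)‖ := by
      rw [norm_mul]
    rw [this, g_abs a p hτ0.le, hB]
    have h1 : ‖f (t - τ)‖ ≤ (t - τ) ^ (q - 1) / Real.Gamma q := hf _ htτ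
    calc τ ^ (p - 1) / Real.Gamma p * ‖f (t - τ)‖
        ≤ τ ^ (p - 1) / Real.Gamma p * ((t - τ) ^ (q - 1) / Real.Gamma q) := by
          apply mul_le_mul_of_nonneg_left h1 (by positivity)
      _ = τ ^ (p - 1) * (t - τ) ^ (q - 1) / (Real.Gamma p * Real.Gamma q) := by ring
  have key := intervalIntegral.norm_integral_le_abs_of_norm_le hbound hBint
  refine key.trans ?_
  have hBval : (∫ τ in (0:ℝ)..t, B τ) = t ^ (p + q - 1) / Real.Gamma ((p + q : ℕ) : ℝ) := by
    rw [hB]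
    simp only
    rw [intervalIntegral.integral_div, beta_nat p q hp hq ht]
    field_simp
  rw [hBval, abs_of_nonneg (by positivity)]

lemma iterConv_singleton (g : ℝ → ℂ) : iterConv [g] = g := rfl

lemma iterConv_cons_cons (g h : ℝ → ℂ) (l : List (ℝ → ℂ)) :
    iterConv (g :: h :: l) = conv g (iterConv (h :: l)) := rfl

lemma iterConv_bound_cons (L : List (ℝ × ℕ)) :
    ∀ x : ℝ × ℕ, 1 ≤ x.2 → (∀ y ∈ L, 1 ≤ y.2) → ∀ t : ℝ, 0 < t →
    ‖iterConv ((x :: L).map fun z => fun s : ℝ =>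
        (s:ℂ) ^ (z.2 - 1) * Complex.exp (-Complex.I * (z.1:ℂ) * (s:ℂ)) /
          ((Real.Gamma z.2 : ℝ) : ℂ)) t‖
      ≤ t ^ (((x :: L).map Prod.snd).sum - 1) /
          Real.Gamma (((((x :: L).map Prod.snd).sum : ℕ)) : ℝ) := by
  induction L with
  | nil =>
      rintro ⟨a, p⟩ hx _ t ht
      simp only [List.map_cons, List.map_nil, iterConv_singleton, List.sum_cons, List.sum_nil,
        add_zero]
      exact le_of_eq (g_abs a p ht.le)
  | cons b L ih =>
      rintro ⟨a, p⟩ hx hy t ht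
      have hb : 1 ≤ b.2 := hy b (by simp)
      have IH := ih b hb (fun y hyy => hy y (by simp [hyy]))
      set q : ℕ := (((b :: L).map Prod.snd).sum) with hqdef
      have hq : 1 ≤ q := le_trans hb
        (by rw [hqdef, List.map_cons, List.sum_cons]; exact Nat.le_add_right _ _)
      have hsum : ((((a, p) :: b :: L).map Prod.snd).sum) = p + q := by
        simp [hqdef]
      rw [hsum]
      simp only [List.map_cons]
      rw [iterConv_cons_cons]
      exact conv_step a p q hx hq _ (fun s hs => IH s hs) ht

lemma iterConv_bound_list (L : List (ℝ × ℕ)) (hL : L ≠ []) (hα : ∀ x ∈ L, 1 ≤ x.2)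
    (t : ℝ) (ht : 0 < t) :
    ‖iterConv (L.map fun x => fun s : ℝ =>
        (s:ℂ) ^ (x.2 - 1) * Complex.exp (-Complex.I * (x.1:ℂ) * (s:ℂ)) /
          ((Real.Gamma x.2 : ℝ) : ℂ)) t‖
      ≤ t ^ ((L.map Prod.snd).sum - 1) / Real.Gamma (((L.map Prod.snd).sum : ℕ) : ℝ) := by
  match L with
  | [] => exact absurd rfl hL
  | x :: L =>
      exact iterConv_bound_cons L x (hα x (by simp))
        (fun y hyy => hα y (by simp [hyy])) t ht

/-- Bound for the iterated convolution of the functions `g_j(t) = t^{α_j-1} e^{-i a_j t}/Γ(α_j)`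
(whose Laplace transforms are `(s + i a_j)^{-α_j}`):
`|f_{n,α}(t)| ≤ t^{|α|-1}/Γ(|α|)` for all `t > 0`. -/
theorem iterConv_bound (n : ℕ) (hn : 1 ≤ n) (a : Fin n → ℝ) (α : Fin n → ℕ)
    (hα : ∀ j, 1 ≤ α j) (t : ℝ) (ht : 0 < t) :
    ‖(iterConv
          (List.ofFn fun j => fun s : ℝ =>
            (s : ℂ) ^ (α j - 1) * Complex.exp (-Complex.I * (a j : ℂ) * (s : ℂ)) /
              ((Real.Gamma (α j) : ℝ) : ℂ))
          t)‖ ≤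
      t ^ ((∑ j, α j) - 1) / Real.Gamma ((∑ j, α j : ℕ) : ℝ) := by
  have key := iterConv_bound_list (List.ofFn fun j => (a j, α j))
    (by simp [List.ofFn_eq_nil_iff]; omega)
    (by
      intro x hx
      rw [List.mem_ofFn] at hx
      obtain ⟨j, rfl⟩ := hx
      exact hα j) t ht
  rw [List.map_ofFn, List.map_ofFn] at key
  have hsum : (List.ofFn ((Prod.snd : ℝ × ℕ → ℕ) ∘ fun j => (a j, α j))).sum = ∑ j, α j := by
    rw [List.sum_ofFn]; rfl
  rw [hsum] at key
  exact key


end
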